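/- Let n be an odd positive integer with n ≡ 1 (mod 4) and n ∉ {5, 9}. Then hmin(n) = (n+3)/4, and d = (n+1)/2 is the unique odd d with 1 ≤ d ≤ n satisfying hmin(n, d) = hmin(n); that is, hmin(n, (n+1)/2) = (n+3)/4 and hmin(n, d) > (n+3)/4 for every odd d ≤ n with d ≠ (n+1)/2. -/

import Mathlib

open Finset
open scoped Classical

/-- The closed neighborhood `N[v] = {v} ∪ N(v)` of a vertex `v` in a simple graph `G`.
A `d`-regular graph with loops is modeled by a simple graph in which every
closed neighborhood has size `d`. -/
noncomputable def closedNbhd {n : ℕ} (G : SimpleGraph (Fin n)) (v : Fin n) : Finset (Fin n) :=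
  Finset.univ.filter fun u => u = v ∨ G.Adj v u

/-- A configuration with parameters `(n, d, h)`: a simple graph `G` on `n` vertices all
of whose closed neighborhoods have size `d` (i.e. a `d`-regular graph with loops),
together with an opinion function `f : V → {1, -1}` having exactly `h` happy vertices. -/
def IsConfig {n : ℕ} (d h : ℕ) (G : SimpleGraph (Fin n)) (f : Fin n → ℤ) : Prop :=
  (∀ v, (closedNbhd G v).card = d) ∧ (∀ v, f v = 1 ∨ f v = -1) ∧
  (Finset.univ.filter fun v => f v = 1).card = h

/-- The number of proponents: vertices `v` with `∑_{u ∈ N[v]} f u ≥ 1`. -/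
noncomputable def numProponents {n : ℕ} (G : SimpleGraph (Fin n)) (f : Fin n → ℤ) : ℕ :=
  (Finset.univ.filter fun v => 1 ≤ ∑ u ∈ closedNbhd G v, f u).card

/-- A configuration is approving if more than `n/2` of its vertices are proponents. -/
def IsApproving {n : ℕ} (G : SimpleGraph (Fin n)) (f : Fin n → ℤ) : Prop :=
  2 * numProponents G f > n

/-- `hmin n d`: the least `h` for which an approving configuration with parameters
`(n, d, h)` exists. -/
noncomputable def hmin (n d : ℕ) : ℕ :=
  sInf {h : ℕ | ∃ (G : SimpleGraph (Fin n)) (f : Fin n → ℤ), IsConfig d h G f ∧ IsApproving G f}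

/-- `hmax n d`: the greatest `h ≤ n` for which a disapproving configuration with parameters
`(n, d, h)` exists. -/
noncomputable def hmax (n d : ℕ) : ℕ :=
  sSup {h : ℕ | h ≤ n ∧
    ∃ (G : SimpleGraph (Fin n)) (f : Fin n → ℤ), IsConfig d h G f ∧ ¬ IsApproving G f}

/-- `hminN n`: the minimum of `hmin n d` over odd `d` with `1 ≤ d ≤ n`. -/
noncomputable def hminN (n : ℕ) : ℕ :=
  sInf {m : ℕ | ∃ d : ℕ, Odd d ∧ 1 ≤ d ∧ d ≤ n ∧ m = hmin n d}

lemma mem_closedNbhd {n : ℕ} {G : SimpleGraph (Fin n)} {v u : Fin n} :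
    u ∈ closedNbhd G v ↔ u = v ∨ G.Adj v u := by
  simp [closedNbhd]

lemma closedNbhd_symm {n : ℕ} {G : SimpleGraph (Fin n)} {v u : Fin n} :
    u ∈ closedNbhd G v ↔ v ∈ closedNbhd G u := by
  simp only [mem_closedNbhd]
  constructor
  · rintro (h | h)
    · exact Or.inl h.symm
    · exact Or.inr h.symm
  · rintro (h | h)
    · exact Or.inl h.symm
    · exact Or.inr h.symm

/-- Sum of ±1 values over a finset. -/
lemma sum_pm {n : ℕ} (f : Fin n → ℤ) (hf : ∀ u, f u = 1 ∨ f u = -1) (s : Finset (Fin n)) :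
    ∑ u ∈ s, f u = 2 * ((s.filter fun u => f u = 1).card : ℤ) - (s.card : ℤ) := by
  induction s using Finset.induction_on with
  | empty => simp
  | @insert a s ha ih =>
    rw [Finset.sum_insert ha, ih, Finset.filter_insert]
    rcases hf a with h1 | h1
    · rw [if_pos h1, Finset.card_insert_of_notMem (by simp [ha]), Finset.card_insert_of_notMem ha]
      push_cast; ring_nf; omega
    · rw [if_neg (by rw [h1]; norm_num), Finset.card_insert_of_notMem ha]
      rw [h1]; push_cast; ring

lemma double_count {n d : ℕ} (G : SimpleGraph (Fin n)) (f : Fin n → ℤ)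
    (hd : ∀ v, (closedNbhd G v).card = d) :
    ∑ v : Fin n, ((closedNbhd G v).filter fun u => f u = 1).card
      = (Finset.univ.filter fun v => f v = 1).card * d := by
  have key : ∀ v : Fin n, ((closedNbhd G v).filter fun u => f u = 1).card
      = ∑ u ∈ Finset.univ.filter (fun u => f u = 1), if u ∈ closedNbhd G v then 1 else 0 := by
    intro v
    rw [← Finset.card_filter]
    congr 1
    ext u
    simp only [Finset.mem_filter, mem_closedNbhd, Finset.mem_univ, true_and]
    tauto
  simp only [key]
  rw [Finset.sum_comm]
  rw [Finset.sum_congr rfl (fun u hu => ?_), Finset.sum_const, smul_eq_mul]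
  rw [← Finset.card_filter]
  rw [show (Finset.univ.filter fun v => u ∈ closedNbhd G v) = closedNbhd G u from ?_, hd u]
  ext v
  simp only [Finset.mem_filter, Finset.mem_univ, true_and]
  rw [closedNbhd_symm]

lemma prop_bound {n d : ℕ} {G : SimpleGraph (Fin n)} {f : Fin n → ℤ} {v : Fin n}
    (hcard : (closedNbhd G v).card = d) (hf : ∀ u, f u = 1 ∨ f u = -1)
    (hv : 1 ≤ ∑ u ∈ closedNbhd G v, f u) :
    d + 1 ≤ 2 * ((closedNbhd G v).filter fun u => f u = 1).card := by
  have := sum_pm f hf (closedNbhd G v)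
  rw [hcard] at this
  rw [this] at hv
  omega

lemma key_ineq {n d h : ℕ} {G : SimpleGraph (Fin n)} {f : Fin n → ℤ}
    (hcfg : IsConfig d h G f) (happ : IsApproving G f) :
    (n + 1) * (d + 1) ≤ 4 * h * d := by
  obtain ⟨hreg, hpm, hh⟩ := hcfg
  have h1 : numProponents G f * (d + 1)
      ≤ ∑ v ∈ Finset.univ.filter (fun v => 1 ≤ ∑ u ∈ closedNbhd G v, f u),
          2 * ((closedNbhd G v).filter fun u => f u = 1).card := by
    rw [show numProponents G f * (d + 1)
        = ∑ _v ∈ Finset.univ.filter (fun v => 1 ≤ ∑ u ∈ closedNbhd G v, f u), (d + 1) by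
      rw [Finset.sum_const, smul_eq_mul]; rfl]
    apply Finset.sum_le_sum
    intro v hv
    rw [Finset.mem_filter] at hv
    exact prop_bound (hreg v) hpm hv.2
  have h2 : ∑ v ∈ Finset.univ.filter (fun v => 1 ≤ ∑ u ∈ closedNbhd G v, f u),
          2 * ((closedNbhd G v).filter fun u => f u = 1).card
      ≤ ∑ v : Fin n, 2 * ((closedNbhd G v).filter fun u => f u = 1).card :=
    Finset.sum_le_sum_of_subset (Finset.filter_subset _ _)
  have h3 : ∑ v : Fin n, 2 * ((closedNbhd G v).filter fun u => f u = 1).card = 2 * (h * d) := by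
    rw [← Finset.mul_sum, double_count G f hreg, hh]
  have h4 : n + 1 ≤ 2 * numProponents G f := happ
  calc (n + 1) * (d + 1) ≤ (2 * numProponents G f) * (d + 1) := by
        exact Nat.mul_le_mul_right _ h4
    _ = 2 * (numProponents G f * (d + 1)) := by ring
    _ ≤ 2 * (2 * (h * d)) := by
        apply Nat.mul_le_mul_left
        omega
    _ = 4 * h * d := by ring

/-- Lower bound: any approving configuration on `n = 4k+1` vertices has `h ≥ k+1`. -/
lemma lower_bound {n d h k : ℕ} {G : SimpleGraph (Fin n)} {f : Fin n → ℤ}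
    (hn : n = 4 * k + 1) (hcfg : IsConfig d h G f) (happ : IsApproving G f) :
    k + 1 ≤ h := by
  have hd1 : 1 ≤ d := by
    have := hcfg.1 ⟨0, by omega⟩
    have hm : (⟨0, by omega⟩ : Fin n) ∈ closedNbhd G ⟨0, by omega⟩ := by
      rw [mem_closedNbhd]; left; rfl
    have := Finset.card_pos.mpr ⟨_, hm⟩
    omega
  have := key_ineq hcfg happ
  subst hn
  nlinarith

/-- If there is an approving configuration on `n = 4k+1` vertices with `h = k+1`, then `d = 2k+1`. -/
lemma unique_d {n d k : ℕ} {G : SimpleGraph (Fin n)} {f : Fin n → ℤ}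
    (hn : n = 4 * k + 1) (hcfg : IsConfig d (k + 1) G f) (happ : IsApproving G f) :
    d = 2 * k + 1 := by
  obtain ⟨hreg, hpm, hh⟩ := hcfg
  -- there is a proponent
  have hP : 0 < numProponents G f := by
    have h4 : n + 1 ≤ 2 * numProponents G f := happ
    omega
  obtain ⟨v, hv⟩ := Finset.card_pos.mp hP
  rw [Finset.mem_filter] at hv
  have hd_le : d ≤ 2 * k + 1 := by
    have h1 := prop_bound (hreg v) hpm hv.2
    have h2 : ((closedNbhd G v).filter fun u => f u = 1).card ≤ k + 1 := by
      rw [← hh]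
      exact Finset.card_le_card (Finset.filter_subset_filter _ (Finset.subset_univ _))
    omega
  have := key_ineq ⟨hreg, hpm, hh⟩ happ
  subst hn
  nlinarith

lemma card_filter_fin (n : ℕ) (p : ℕ → Prop) :
    (Finset.univ.filter fun u : Fin n => p u.val).card = ((Finset.range n).filter p).card := by
  apply Finset.card_bij (fun u _ => u.val)
  · intro u hu
    rw [Finset.mem_filter] at hu ⊢
    exact ⟨Finset.mem_range.mpr u.isLt, hu.2⟩
  · intro u _ v _ h
    exact Fin.ext h
  · intro a ha
    rw [Finset.mem_filter, Finset.mem_range] at ha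
    exact ⟨⟨a, ha.1⟩, Finset.mem_filter.mpr ⟨Finset.mem_univ _, ha.2⟩, rfl⟩

lemma card_filter_val_le (n m : ℕ) (h : m < n) :
    (Finset.univ.filter fun v : Fin n => v.val ≤ m).card = m + 1 := by
  rw [← Finset.card_range (m+1)]
  apply Finset.card_bij (fun u _ => u.val)
  · intro u hu
    rw [Finset.mem_filter] at hu
    rw [Finset.mem_range]
    omega
  · intro u _ v _ h
    exact Fin.ext h
  · intro a ha
    rw [Finset.mem_range] at ha
    exact ⟨⟨a, by omega⟩, Finset.mem_filter.mpr ⟨Finset.mem_univ _, by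
      simp only []; omega⟩, rfl⟩

def circPred (n m b a : ℕ) : Prop :=
  (b ≤ a ∧ (a - b ≤ m ∨ b + n - a ≤ m)) ∨ (a ≤ b ∧ (b - a ≤ m ∨ a + n - b ≤ m))

def circG (n m : ℕ) : SimpleGraph (Fin n) where
  Adj u v := u ≠ v ∧ ((u.val ≤ v.val ∧ (v.val - u.val ≤ m ∨ u.val + n - v.val ≤ m)) ∨
                      (v.val ≤ u.val ∧ (u.val - v.val ≤ m ∨ v.val + n - u.val ≤ m)))
  symm := by
    constructor
    intro u v ⟨h1, h2⟩
    exact ⟨h1.symm, by tauto⟩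
  loopless := by
    constructor
    intro v h
    exact h.1 rfl

lemma circ_closedNbhd (n m : ℕ) (v : Fin n) :
    closedNbhd (circG n m) v = Finset.univ.filter fun u : Fin n => circPred n m v.val u.val := by
  ext u
  simp only [closedNbhd, Finset.mem_filter]
  simp only [closedNbhd, Finset.mem_filter, Finset.mem_univ, true_and, circG, Fin.ext_iff,
    ne_eq, circPred]
  constructor
  · rintro (h | ⟨h1, h2⟩)
    · omega
    · omega
  · intro h
    rcases eq_or_ne u.val v.val with he | he
    · left; omega
    · right; exact ⟨fun hc => he (by omega), by omega⟩

lemma circ_card {n m : ℕ} (hnm : 2 * m + 1 ≤ n) (v : Fin n) :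
    (closedNbhd (circG n m) v).card = 2 * m + 1 := by
  rw [circ_closedNbhd, card_filter_fin n (circPred n m v.val)]
  have hb : v.val < n := v.isLt
  set b := v.val with hbdef
  rcases le_or_gt m b with h1 | h1
  · rcases lt_or_ge (b + m) n with h2 | h2
    · -- middle case
      rw [show ((Finset.range n).filter _) = Finset.Icc (b - m) (b + m) from ?_]
      · rw [Nat.card_Icc]; omega
      · ext a
        simp only [Finset.mem_filter, Finset.mem_range, Finset.mem_Icc, circPred]
        omega
    · -- wrap high
      rw [show ((Finset.range n).filter _) = Finset.Icc (b - m) (n - 1) ∪ Finset.Icc 0 (b + m - n) from ?_]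
      · rw [Finset.card_union_of_disjoint, Nat.card_Icc, Nat.card_Icc]
        · omega
        · rw [Finset.disjoint_left]
          intro a ha ha'
          rw [Finset.mem_Icc] at ha ha'
          omega
      · ext a
        simp only [Finset.mem_filter, Finset.mem_range, Finset.mem_union, Finset.mem_Icc, circPred]
        omega
  · -- wrap low
    rw [show ((Finset.range n).filter _) = Finset.Icc 0 (b + m) ∪ Finset.Icc (b + n - m) (n - 1) from ?_]
    · rw [Finset.card_union_of_disjoint, Nat.card_Icc, Nat.card_Icc]
      · omega
      · rw [Finset.disjoint_left]
        intro a ha ha'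
        rw [Finset.mem_Icc] at ha ha'
        omega
    · ext a
      simp only [Finset.mem_filter, Finset.mem_range, Finset.mem_union, Finset.mem_Icc, circPred]
      omega

lemma exists_allones {n d : ℕ} (hd : Odd d) (hdn : d ≤ n) :
    ∃ (G : SimpleGraph (Fin n)) (f : Fin n → ℤ), IsConfig d n G f ∧ IsApproving G f := by
  obtain ⟨m, hm⟩ := hd
  refine ⟨circG n m, fun _ => 1, ⟨?_, fun v => Or.inl rfl, ?_⟩, ?_⟩
  · intro v
    rw [circ_card (by omega) v]
    omega
  · rw [Finset.filter_true_of_mem (fun _ _ => rfl), Finset.card_univ, Fintype.card_fin]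
  · have : ∀ v : Fin n, 1 ≤ ∑ u ∈ closedNbhd (circG n m) v, (1 : ℤ) := by
      intro v
      rw [Finset.sum_const, circ_card (by omega) v, nsmul_eq_mul]
      push_cast
      omega
    unfold IsApproving numProponents
    rw [Finset.filter_true_of_mem (fun v _ => this v), Finset.card_univ, Fintype.card_fin]
    omega

lemma hmin_mem {n d : ℕ} (hd : Odd d) (hdn : d ≤ n) (hn : 0 < n) :
    hmin n d ∈ {h : ℕ | ∃ (G : SimpleGraph (Fin n)) (f : Fin n → ℤ),
      IsConfig d h G f ∧ IsApproving G f} := by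
  apply Nat.sInf_mem
  exact ⟨n, exists_allones hd hdn⟩

/-- Adjacency relation (on values) for the extremal construction on `4k+1` vertices:
`H = [0,k]` (happy), `A = [k+1,2k]`, `Q = [2k+1,4k]`.
Edges: all pairs in `H ∪ A` touching `H`; complement of a cycle on `A`;
complete graph on `Q`; a perfect matching-like gadget `a ↔ {2a-1, 2a}` between `A` and `Q`. -/
def mainRel (k a b : ℕ) : Prop :=
  (a ≤ k ∧ b ≤ 2*k) ∨ (b ≤ k ∧ a ≤ 2*k) ∨
  (k+1 ≤ a ∧ a ≤ 2*k ∧ k+1 ≤ b ∧ b ≤ 2*k ∧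
    ¬(a + 1 = b ∨ b + 1 = a ∨ a + (k-1) = b ∨ b + (k-1) = a)) ∨
  (2*k+1 ≤ a ∧ 2*k+1 ≤ b) ∨
  (k+1 ≤ a ∧ a ≤ 2*k ∧ (b = 2*a - 1 ∨ b = 2*a)) ∨
  (k+1 ≤ b ∧ b ≤ 2*k ∧ (a = 2*b - 1 ∨ a = 2*b))

def mainG (k : ℕ) : SimpleGraph (Fin (4*k+1)) where
  Adj u v := u ≠ v ∧ mainRel k u.val v.val
  symm := by
    constructor
    intro u v ⟨h1, h2⟩
    refine ⟨h1.symm, ?_⟩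
    unfold mainRel at h2 ⊢
    omega
  loopless := by
    constructor
    intro v h
    exact h.1 rfl

def mainPred (k b a : ℕ) : Prop := a = b ∨ mainRel k b a

lemma main_closedNbhd (k : ℕ) (v : Fin (4*k+1)) :
    closedNbhd (mainG k) v = Finset.univ.filter fun u : Fin (4*k+1) =>
      mainPred k v.val u.val := by
  ext u
  simp only [closedNbhd, Finset.mem_filter]
  simp only [closedNbhd, Finset.mem_filter, Finset.mem_univ, true_and, mainG, mainPred,
    Fin.ext_iff, ne_eq]
  constructor
  · rintro (h | ⟨h1, h2⟩)
    · exact Or.inl h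
    · exact Or.inr h2
  · rintro (h | h)
    · exact Or.inl h
    · rcases eq_or_ne u.val v.val with he | he
      · exact Or.inl he
      · exact Or.inr ⟨fun hc => he (by omega), h⟩

lemma main_card (k : ℕ) (hk : 3 ≤ k) (v : Fin (4*k+1)) :
    (closedNbhd (mainG k) v).card = 2*k+1 := by
  rw [main_closedNbhd, card_filter_fin _ (mainPred k v.val)]
  have hb : v.val < 4*k+1 := v.isLt
  set b := v.val with hbdef
  rcases le_or_gt b k with hcase | hcase
  · -- H vertex
    rw [show ((Finset.range (4*k+1)).filter (mainPred k b)) = Finset.range (2*k+1) from ?_]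
    · rw [Finset.card_range]
    · ext a
      simp only [Finset.mem_filter, Finset.mem_range, mainPred, mainRel]
      omega
  rcases le_or_gt b (2*k) with hcase2 | hcase2
  · -- A vertex
    set x1 : ℕ := if b = 2*k then k+1 else b+1 with hx1
    set x2 : ℕ := if b = k+1 then 2*k else b-1 with hx2
    have hx1r : k+1 ≤ x1 ∧ x1 ≤ 2*k := by rw [hx1]; split_ifs <;> omega
    have hx2r : k+1 ≤ x2 ∧ x2 ≤ 2*k := by rw [hx2]; split_ifs <;> omega
    have hx12 : x1 ≠ x2 := by rw [hx1, hx2]; split_ifs <;> omega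
    rw [show ((Finset.range (4*k+1)).filter (mainPred k b))
        = (Finset.range (k+1) ∪ ((Finset.Icc (k+1) (2*k)) \ {x1, x2}))
            ∪ {2*b - 1, 2*b} from ?_]
    · rw [Finset.card_union_of_disjoint, Finset.card_union_of_disjoint,
        Finset.card_sdiff_of_subset, Finset.card_range, Nat.card_Icc]
      · rw [Finset.card_insert_of_notMem (by simp; omega), Finset.card_singleton,
          Finset.card_insert_of_notMem (by simp; omega), Finset.card_singleton]
        omega
      · intro a ha
        simp only [Finset.mem_insert, Finset.mem_singleton] at ha
        rw [Finset.mem_Icc]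
        rcases ha with h | h <;> omega
      · rw [Finset.disjoint_left]
        intro a ha ha'
        rw [Finset.mem_range] at ha
        rw [Finset.mem_sdiff, Finset.mem_Icc] at ha'
        omega
      · rw [Finset.disjoint_left]
        intro a ha ha'
        simp only [Finset.mem_union, Finset.mem_range, Finset.mem_sdiff, Finset.mem_Icc] at ha
        simp only [Finset.mem_insert, Finset.mem_singleton] at ha'
        omega
    · ext a
      simp only [Finset.mem_filter, Finset.mem_range, mainPred, mainRel, Finset.mem_union,
        Finset.mem_sdiff, Finset.mem_Icc, Finset.mem_insert, Finset.mem_singleton]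
      rw [hx1, hx2]
      split_ifs <;> omega
  · -- Q vertex
    rcases Nat.even_or_odd b with ⟨c, hc⟩ | ⟨c, hc⟩
    · rw [show ((Finset.range (4*k+1)).filter (mainPred k b))
          = insert c (Finset.Icc (2*k+1) (4*k)) from ?_]
      · rw [Finset.card_insert_of_notMem (by rw [Finset.mem_Icc]; omega), Nat.card_Icc]
        omega
      · ext a
        simp only [Finset.mem_filter, Finset.mem_range, mainPred, mainRel, Finset.mem_insert,
          Finset.mem_Icc]
        omega
    · rw [show ((Finset.range (4*k+1)).filter (mainPred k b))
          = insert (c+1) (Finset.Icc (2*k+1) (4*k)) from ?_]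
      · rw [Finset.card_insert_of_notMem (by rw [Finset.mem_Icc]; omega), Nat.card_Icc]
        omega
      · ext a
        simp only [Finset.mem_filter, Finset.mem_range, mainPred, mainRel, Finset.mem_insert,
          Finset.mem_Icc]
        omega

lemma exists_main (k : ℕ) (hk : 3 ≤ k) :
    ∃ (G : SimpleGraph (Fin (4*k+1))) (f : Fin (4*k+1) → ℤ),
      IsConfig (2*k+1) (k+1) G f ∧ IsApproving G f := by
  set f : Fin (4*k+1) → ℤ := fun u => if u.val ≤ k then 1 else -1 with hf
  have hfpm : ∀ v, f v = 1 ∨ f v = -1 := by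
    intro v; by_cases h : v.val ≤ k <;> simp [hf, h]
  have hf1 : ∀ v : Fin (4*k+1), f v = 1 ↔ v.val ≤ k := by
    intro v; by_cases h : v.val ≤ k <;> simp [hf, h]
  have hhappy : (Finset.univ.filter fun v : Fin (4*k+1) => f v = 1)
      = Finset.univ.filter fun v : Fin (4*k+1) => v.val ≤ k := by
    ext v; simp [hf1]
  have hhappycard : (Finset.univ.filter fun v : Fin (4*k+1) => f v = 1).card = k + 1 := by
    rw [hhappy, card_filter_val_le _ k (by omega)]
  -- every vertex with value ≤ 2k is a proponent
  have hprop : ∀ v : Fin (4*k+1), v.val ≤ 2*k → 1 ≤ ∑ u ∈ closedNbhd (mainG k) v, f u := by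
    intro v hv
    have hsum := sum_pm f hfpm (closedNbhd (mainG k) v)
    rw [main_card k hk v] at hsum
    have hsub : (Finset.univ.filter fun u : Fin (4*k+1) => u.val ≤ k)
        ⊆ (closedNbhd (mainG k) v).filter fun u => f u = 1 := by
      intro u hu
      rw [Finset.mem_filter] at hu
      rw [Finset.mem_filter, hf1]
      refine ⟨?_, hu.2⟩
      rw [main_closedNbhd, Finset.mem_filter]
      refine ⟨Finset.mem_univ _, ?_⟩
      unfold mainPred mainRel
      omega
    have hcard : k + 1 ≤ ((closedNbhd (mainG k) v).filter fun u => f u = 1).card := by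
      have h1 : (Finset.univ.filter fun v : Fin (4*k+1) => v.val ≤ k).card = k + 1 := by
        rw [← hhappycard, hhappy]
      rw [← h1]
      exact Finset.card_le_card hsub
    rw [hsum]
    have : ((2:ℤ) * k + 2) ≤ 2 * (((closedNbhd (mainG k) v).filter fun u => f u = 1).card : ℤ) := by
      push_cast
      omega
    push_cast at this ⊢
    omega
  refine ⟨mainG k, f, ⟨fun v => main_card k hk v, hfpm, hhappycard⟩, ?_⟩
  unfold IsApproving numProponents
  have hsub2 : (Finset.univ.filter fun v : Fin (4*k+1) => v.val ≤ 2*k)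
      ⊆ Finset.univ.filter fun v => 1 ≤ ∑ u ∈ closedNbhd (mainG k) v, f u := by
    intro v hv
    rw [Finset.mem_filter] at hv ⊢
    exact ⟨Finset.mem_univ _, hprop v hv.2⟩
  have hc : (Finset.univ.filter fun v : Fin (4*k+1) => v.val ≤ 2*k).card = 2*k+1 := by
    rw [card_filter_val_le _ (2*k) (by omega)]
  have := Finset.card_le_card hsub2
  omega

/-- for odd `n ≡ 1 (mod 4)`, `n ∉ {5,9}`: `hmin(n) = (n+3)/4` and
`d = (n+1)/2` is the unique odd degree attaining it. -/
theorem stmt17 (n : ℕ) (hn : Odd n) (hnpos : 0 < n) (hmod : n % 4 = 1)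
    (h5 : n ≠ 5) (h9 : n ≠ 9) :
    hminN n = (n + 3) / 4 ∧
    hmin n ((n + 1) / 2) = (n + 3) / 4 ∧
    ∀ d : ℕ, Odd d → 1 ≤ d → d ≤ n → d ≠ (n + 1) / 2 → hmin n d > (n + 3) / 4 := by
  obtain ⟨k, rfl⟩ : ∃ k, n = 4 * k + 1 := ⟨n / 4, by omega⟩
  have e1 : (4 * k + 1 + 3) / 4 = k + 1 := by omega
  have e2 : (4 * k + 1 + 1) / 2 = 2 * k + 1 := by omega
  have hkk : k = 0 ∨ 3 ≤ k := by omega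
  have hoddd : Odd (2 * k + 1) := ⟨k, by omega⟩
  have hdn : 2 * k + 1 ≤ 4 * k + 1 := by omega
  -- existence of the extremal configuration
  have hexist : ∃ (G : SimpleGraph (Fin (4*k+1))) (f : Fin (4*k+1) → ℤ),
      IsConfig (2*k+1) (k+1) G f ∧ IsApproving G f := by
    rcases hkk with h0 | h3
    · subst h0
      simpa using exists_allones (n := 1) (d := 1) ⟨0, rfl⟩ le_rfl
    · exact exists_main k h3
  have hub : hmin (4*k+1) (2*k+1) ≤ k + 1 := Nat.sInf_le hexist
  -- lower bound for every valid degree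
  have hlb : ∀ d : ℕ, Odd d → 1 ≤ d → d ≤ 4*k+1 → k + 1 ≤ hmin (4*k+1) d := by
    intro d hd hd1 hdle
    obtain ⟨G, f, hcfg, happ⟩ := hmin_mem hd hdle (by omega)
    exact lower_bound rfl hcfg happ
  have heq : hmin (4*k+1) (2*k+1) = k + 1 :=
    le_antisymm hub (hlb _ hoddd (by omega) hdn)
  refine ⟨?_, by rw [e2, heq, e1], ?_⟩
  · -- hminN
    rw [e1]
    have hmemN : k + 1 ∈ {m : ℕ | ∃ d : ℕ, Odd d ∧ 1 ≤ d ∧ d ≤ 4*k+1 ∧ m = hmin (4*k+1) d} :=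
      ⟨2*k+1, hoddd, by omega, hdn, heq.symm⟩
    have hle : hminN (4*k+1) ≤ k + 1 := Nat.sInf_le hmemN
    have hmem2 : hminN (4*k+1) ∈ {m : ℕ | ∃ d : ℕ, Odd d ∧ 1 ≤ d ∧ d ≤ 4*k+1 ∧ m = hmin (4*k+1) d} :=
      Nat.sInf_mem ⟨k+1, hmemN⟩
    obtain ⟨d, hd, hd1, hdle, hdeq⟩ := hmem2
    have := hlb d hd hd1 hdle
    omega
  · -- uniqueness
    intro d hd hd1 hdle hdne
    rw [e2] at hdne
    rw [e1]
    obtain ⟨G, f, hcfg, happ⟩ := hmin_mem hd hdle (by omega)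
    have hge := lower_bound rfl hcfg happ
    rcases Nat.lt_or_ge (k + 1) (hmin (4*k+1) d) with h | h
    · exact h
    · exfalso
      have : hmin (4*k+1) d = k + 1 := by omega
      rw [this] at hcfg
      exact hdne (unique_d rfl hcfg happ)
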